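/- In the missing-sampling model for delta modulation, for every frequency index m ∈ {0,…,N−1}, the variance of the discrete Fourier transform of the sampled signal satisfies E[|Y_d(m) − p·X(m)|²] = (p − p²)·ε_x + p·N·Δ²/4, where ε_x = Σ_{n=0}^{N−1} x(n)², Y_d(m) = Σ_{n=0}^{N−1} y_d(n) e^{−2πi nm/N}, and X(m) = Σ_{n=0}^{N−1} x(n) e^{−2πi nm/N}. -/

import Mathlib

open MeasureTheory ProbabilityTheory

/-- The DFT kernel `e^{-2πi n m / N}`. -/
noncomputable def dftKernel (N : ℕ) (n m : Fin N) : ℂ :=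
  Complex.exp (-2 * (Real.pi : ℂ) * Complex.I * ((n : ℕ) : ℂ) * ((m : ℕ) : ℂ) / ((N : ℕ) : ℂ))

lemma dftKernel_normSq (N : ℕ) (n m : Fin N) : Complex.normSq (dftKernel N n m) = 1 := by
  have h : dftKernel N n m
      = Complex.exp (((-2 * Real.pi * (n : ℕ) * (m : ℕ) / (N : ℕ) : ℝ) : ℂ) * Complex.I) := by
    unfold dftKernel
    push_cast
    ring_nf
  rw [h, Complex.normSq_eq_norm_sq, Complex.norm_exp_ofReal_mul_I]
  norm_num

lemma integrable_smul_dirac (c : ℝ) (a : ℝ) (f : ℝ → ℝ) (hf : Measurable f) :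
    Integrable f (ENNReal.ofReal c • Measure.dirac a) := by
  have hdir : Integrable f (Measure.dirac a) := by
    refine ⟨hf.aestronglyMeasurable, ?_⟩
    simp [HasFiniteIntegral, lintegral_dirac]
  rcases eq_or_ne (ENNReal.ofReal c) 0 with h | h
  · simp [h]
  · exact (integrable_smul_measure h (by simp)).2 hdir

lemma integrable_triple (c₁ c₂ c₃ : ℝ) (a₁ a₂ a₃ : ℝ) (f : ℝ → ℝ) (hf : Measurable f) :
    Integrable f (ENNReal.ofReal c₁ • Measure.dirac a₁ + ENNReal.ofReal c₂ • Measure.dirac a₂ +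
      ENNReal.ofReal c₃ • Measure.dirac a₃) :=
  ((integrable_smul_dirac c₁ a₁ f hf).add_measure (integrable_smul_dirac c₂ a₂ f hf)).add_measure
    (integrable_smul_dirac c₃ a₃ f hf)

lemma integral_triple (c₁ c₂ c₃ : ℝ) (h₁ : 0 ≤ c₁) (h₂ : 0 ≤ c₂) (h₃ : 0 ≤ c₃)
    (a₁ a₂ a₃ : ℝ) (f : ℝ → ℝ) (hf : Measurable f) :
    ∫ t, f t ∂(ENNReal.ofReal c₁ • Measure.dirac a₁ + ENNReal.ofReal c₂ • Measure.dirac a₂ +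
      ENNReal.ofReal c₃ • Measure.dirac a₃) = c₁ * f a₁ + c₂ * f a₂ + c₃ * f a₃ := by
  rw [integral_add_measure
      ((integrable_smul_dirac c₁ a₁ f hf).add_measure (integrable_smul_dirac c₂ a₂ f hf))
      (integrable_smul_dirac c₃ a₃ f hf),
    integral_add_measure (integrable_smul_dirac c₁ a₁ f hf) (integrable_smul_dirac c₂ a₂ f hf),
    integral_smul_measure, integral_smul_measure, integral_smul_measure,
    integral_dirac, integral_dirac, integral_dirac,
    ENNReal.toReal_ofReal h₁, ENNReal.toReal_ofReal h₂, ENNReal.toReal_ofReal h₃]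
  simp [smul_eq_mul]

/-- In the missing-sampling model for delta modulation, for every
frequency index `m`, `E[|Y_d(m) − p·X(m)|²] = (p − p²)·ε_x + p·N·Δ²/4`,
where `ε_x = Σ x(n)²` and `Y_d`, `X` are the DFTs of `y_d`, `x`. -/
theorem dm_dft_variance
    {Ω : Type*} [MeasurableSpace Ω] (μ : Measure Ω) [IsProbabilityMeasure μ]
    (N : ℕ) (hN : 0 < N) (x : Fin N → ℝ) (p Δ : ℝ)
    (hp0 : 0 ≤ p) (hp1 : p ≤ 1) (hΔ : 0 < Δ)
    (y : Fin N → Ω → ℝ) (hmeas : ∀ n, Measurable (y n))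
    (hindep : iIndepFun y μ)
    (hlaw : ∀ n, Measure.map (y n) μ =
      ENNReal.ofReal (1 - p) • Measure.dirac (0 : ℝ) +
      ENNReal.ofReal (p / 2) • Measure.dirac (x n + Δ / 2) +
      ENNReal.ofReal (p / 2) • Measure.dirac (x n - Δ / 2))
    (m : Fin N) :
    (∫ ω, ‖(∑ n : Fin N, (y n ω : ℂ) * dftKernel N n m) -
        (p : ℂ) * ∑ n : Fin N, (x n : ℂ) * dftKernel N n m‖ ^ 2 ∂μ) =
      (p - p ^ 2) * (∑ n : Fin N, (x n) ^ 2) + p * N * Δ ^ 2 / 4 := by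
  have hp2 : 0 ≤ p / 2 := by linarith
  have hp1' : 0 ≤ 1 - p := by linarith
  -- moments of y n
  have hmoment : ∀ (f : ℝ → ℝ), Measurable f → ∀ n,
      (∫ ω, f (y n ω) ∂μ) = (1 - p) * f 0 + p / 2 * f (x n + Δ / 2) + p / 2 * f (x n - Δ / 2) := by
    intro f hf n
    rw [← integral_map (hmeas n).aemeasurable hf.aestronglyMeasurable, hlaw n,
      integral_triple _ _ _ hp1' hp2 hp2 _ _ _ f hf]
  have hIntf : ∀ (f : ℝ → ℝ), Measurable f → ∀ n, Integrable (fun ω => f (y n ω)) μ := by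
    intro f hf n
    have : Integrable f (Measure.map (y n) μ) := by
      rw [hlaw n]; exact integrable_triple _ _ _ _ _ _ f hf
    exact (integrable_map_measure hf.aestronglyMeasurable (hmeas n).aemeasurable).1 this
  have hInt1 : ∀ n, Integrable (y n) μ := fun n => hIntf id measurable_id n
  have hInt2 : ∀ n, Integrable (fun ω => (y n ω) ^ 2) μ :=
    fun n => hIntf (fun t => t ^ 2) (by measurability) n
  have hE1 : ∀ n, (∫ ω, y n ω ∂μ) = p * x n := by
    intro n
    have := hmoment id measurable_id n
    simp only [id] at this
    rw [this]; ring
  have hE2 : ∀ n, (∫ ω, (y n ω) ^ 2 ∂μ) = p * x n ^ 2 + p * Δ ^ 2 / 4 := by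
    intro n
    have := hmoment (fun t => t ^ 2) (by measurability) n
    rw [this]; ring
  -- the centered variables
  set z : Fin N → Ω → ℝ := fun n ω => y n ω - p * x n with hz
  have hzmeas : ∀ n, Measurable (z n) := fun n => (hmeas n).sub measurable_const
  have hzint : ∀ n, Integrable (z n) μ := fun n => (hInt1 n).sub (integrable_const _)
  have hzE : ∀ n, (∫ ω, z n ω ∂μ) = 0 := by
    intro n
    rw [integral_sub (hInt1 n) (integrable_const _), hE1 n, integral_const]
    simp
  -- variance of z n
  have hzsq : ∀ n, (fun ω => z n ω * z n ω)
      = fun ω => (y n ω) ^ 2 - (2 * (p * x n)) * y n ω + (p * x n) ^ 2 := by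
    intro n; funext ω; simp only [hz]; ring
  have hzsqint : ∀ n, Integrable (fun ω => z n ω * z n ω) μ := by
    intro n
    rw [hzsq n]
    exact ((hInt2 n).sub ((hInt1 n).const_mul _)).add (integrable_const _)
  have hzvar : ∀ n, (∫ ω, z n ω * z n ω ∂μ) = (p - p ^ 2) * x n ^ 2 + p * Δ ^ 2 / 4 := by
    intro n
    have hA : Integrable (fun ω => y n ω ^ 2 - 2 * (p * x n) * y n ω) μ :=
      (hInt2 n).sub ((hInt1 n).const_mul _)
    have hB : Integrable (fun ω => 2 * (p * x n) * y n ω) μ := (hInt1 n).const_mul _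
    rw [hzsq n, integral_add hA (integrable_const _), integral_sub (hInt2 n) hB,
      integral_const_mul, hE1 n, hE2 n, integral_const]
    simp only [measure_univ, ENNReal.toReal_one, probReal_univ, smul_eq_mul, one_mul]
    ring
  -- independence for distinct indices
  have hzindep : ∀ n n', n ≠ n' → IndepFun (z n) (z n') μ := by
    intro n n' hnn'
    have h := hindep.indepFun hnn'
    exact h.comp (measurable_id.sub measurable_const) (measurable_id.sub measurable_const)
  have hzprodint : ∀ n n', Integrable (fun ω => z n ω * z n' ω) μ := by
    intro n n'
    rcases eq_or_ne n n' with rfl | hnn'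
    · exact hzsqint n
    · exact (hzindep n n' hnn').integrable_mul (hzint n) (hzint n')
  have hzcov : ∀ n n', (∫ ω, z n ω * z n' ω ∂μ)
      = if n = n' then (p - p ^ 2) * x n ^ 2 + p * Δ ^ 2 / 4 else 0 := by
    intro n n'
    rcases eq_or_ne n n' with rfl | hnn'
    · rw [if_pos rfl]; exact hzvar n
    · rw [if_neg hnn']
      have h := (hzindep n n' hnn').integral_mul_eq_mul_integral (hzint n).aestronglyMeasurable (hzint n').aestronglyMeasurable
      calc (∫ ω, z n ω * z n' ω ∂μ) = integral μ (z n * z n') := rfl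
        _ = 0 := by rw [h, hzE n, hzE n', mul_zero]
  -- rewrite the integrand
  set a : Fin N → ℝ := fun n => (dftKernel N n m).re with ha
  set b : Fin N → ℝ := fun n => (dftKernel N n m).im with hb
  have hab : ∀ n, a n ^ 2 + b n ^ 2 = 1 := by
    intro n
    have := dftKernel_normSq N n m
    rw [Complex.normSq_apply] at this
    simp only [ha, hb]
    nlinarith [this]
  have hpoint : ∀ ω, ‖(∑ n : Fin N, (y n ω : ℂ) * dftKernel N n m) -
        (p : ℂ) * ∑ n : Fin N, (x n : ℂ) * dftKernel N n m‖ ^ 2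
      = ∑ n : Fin N, ∑ n' : Fin N, (z n ω * z n' ω) * (a n * a n' + b n * b n') := by
    intro ω
    have hsum : (∑ n : Fin N, (y n ω : ℂ) * dftKernel N n m) -
        (p : ℂ) * ∑ n : Fin N, (x n : ℂ) * dftKernel N n m
        = ∑ n : Fin N, ((z n ω : ℝ) : ℂ) * dftKernel N n m := by
      rw [Finset.mul_sum, ← Finset.sum_sub_distrib]
      refine Finset.sum_congr rfl fun n _ => ?_
      simp only [hz]
      push_cast
      ring
    rw [hsum, Complex.sq_norm, Complex.normSq_apply, Complex.re_sum, Complex.im_sum]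
    simp only [Complex.re_ofReal_mul, Complex.im_ofReal_mul]
    rw [show ∀ u v : ℝ, u * u + v * v = u ^ 2 + v ^ 2 from fun u v => by ring]
    rw [pow_two, pow_two, Finset.sum_mul_sum, Finset.sum_mul_sum, ← Finset.sum_add_distrib]
    refine Finset.sum_congr rfl fun n _ => ?_
    rw [← Finset.sum_add_distrib]
    exact Finset.sum_congr rfl fun n' _ => by simp only [ha, hb]; ring
  simp only [hpoint]
  rw [integral_finset_sum _ (fun n _ => integrable_finset_sum _
    (fun n' _ => (hzprodint n n').mul_const _))]
  have : ∀ n : Fin N, (∫ ω, ∑ n' : Fin N, (z n ω * z n' ω) * (a n * a n' + b n * b n') ∂μ)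
      = ((p - p ^ 2) * x n ^ 2 + p * Δ ^ 2 / 4) := by
    intro n
    rw [integral_finset_sum _ (fun n' _ => (hzprodint n n').mul_const _)]
    have hterm : ∀ n' : Fin N, (∫ ω, (z n ω * z n' ω) * (a n * a n' + b n * b n') ∂μ)
        = (if n = n' then (p - p ^ 2) * x n ^ 2 + p * Δ ^ 2 / 4 else 0)
          * (a n * a n' + b n * b n') := by
      intro n'
      rw [← hzcov n n', ← integral_mul_const]
    simp only [hterm, ite_mul, zero_mul]
    rw [Finset.sum_ite_eq]
    simp only [Finset.mem_univ, if_true]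
    have h1 : a n * a n + b n * b n = 1 := by
      have := hab n; nlinarith [this]
    rw [h1, mul_one]
  simp only [this]
  rw [Finset.sum_add_distrib, ← Finset.mul_sum, Finset.sum_const, Finset.card_univ,
    Fintype.card_fin, nsmul_eq_mul]
  ring
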